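/- For the map sending each pair of words (w_1, w_2) over a free group F to the 4×4 matrix ρ(w_1) ⊕ ρ(w_2) with ρ injective into SL(2,ℤ): the image semigroup contains a diagonal matrix if and only if it contains the 4×4 identity matrix. -/

import Mathlib

/-- The 4×4 block-diagonal integer matrix `ρ(w₁) ⊕ ρ(w₂)` built from a pair of
free-group words `(w₁, w₂)` via a homomorphism `ρ` into `SL(2,ℤ)`. -/
def blockMat (ρ : FreeGroup Bool →* Matrix.SpecialLinearGroup (Fin 2) ℤ)
    (w : FreeGroup Bool × FreeGroup Bool) : Matrix (Fin 4) (Fin 4) ℤ :=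
  Matrix.reindex finSumFinEquiv finSumFinEquiv
    (Matrix.fromBlocks (ρ w.1 : Matrix (Fin 2) (Fin 2) ℤ) 0 0
      (ρ w.2 : Matrix (Fin 2) (Fin 2) ℤ))

theorem blockMat_mul (ρ : FreeGroup Bool →* Matrix.SpecialLinearGroup (Fin 2) ℤ)
    (w w' : FreeGroup Bool × FreeGroup Bool) :
    blockMat ρ w * blockMat ρ w' = blockMat ρ (w * w') := by
  simp only [blockMat, Matrix.reindex_apply,
    Matrix.submatrix_mul_equiv _ _ _ finSumFinEquiv.symm _,
    Matrix.fromBlocks_multiply, Prod.fst_mul, Prod.snd_mul, map_mul,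
    Matrix.SpecialLinearGroup.coe_mul]
  congr 1 <;> simp [Matrix.fromBlocks]

theorem sl2_diag_sq (M : Matrix.SpecialLinearGroup (Fin 2) ℤ)
    (h01 : (M : Matrix (Fin 2) (Fin 2) ℤ) 0 1 = 0)
    (h10 : (M : Matrix (Fin 2) (Fin 2) ℤ) 1 0 = 0) : M * M = 1 := by
  have hdet := M.2
  rw [Matrix.det_fin_two, h01, h10] at hdet
  simp only [mul_zero, sub_zero] at hdet
  have h00 : (M : Matrix (Fin 2) (Fin 2) ℤ) 0 0 = 1 ∨ (M : Matrix (Fin 2) (Fin 2) ℤ) 0 0 = -1 :=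
    Int.isUnit_iff.mp (IsUnit.of_mul_eq_one _ hdet)
  have h11 : (M : Matrix (Fin 2) (Fin 2) ℤ) 1 1 = 1 ∨ (M : Matrix (Fin 2) (Fin 2) ℤ) 1 1 = -1 :=
    Int.isUnit_iff.mp (IsUnit.of_mul_eq_one _ (by rw [mul_comm] at hdet; exact hdet))
  ext i j
  rw [Matrix.SpecialLinearGroup.coe_mul, Matrix.mul_apply, Fin.sum_univ_two]
  fin_cases i <;> fin_cases j <;>
    simp_all <;> rcases h00 with h | h <;> rcases h11 with h' | h' <;> simp_all

/-- For the map sending each pair of words `(w₁, w₂)` over the free group `F` on `{a,b}`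
to the 4×4 matrix `ρ(w₁) ⊕ ρ(w₂)`, with `ρ` an injective homomorphism into `SL(2,ℤ)`:
the semigroup generated by the image of a finite set `W ⊆ F × F` contains a diagonal
matrix if and only if it contains the 4×4 identity matrix. -/
theorem diagonal_mem_iff_identity_mem
    (ρ : FreeGroup Bool →* Matrix.SpecialLinearGroup (Fin 2) ℤ)
    (hρ : Function.Injective ρ)
    (W : Finset (FreeGroup Bool × FreeGroup Bool)) :
    (∃ D ∈ Subsemigroup.closure
        (blockMat ρ '' (W : Set (FreeGroup Bool × FreeGroup Bool))), Matrix.IsDiag D) ↔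
      (1 : Matrix (Fin 4) (Fin 4) ℤ) ∈
        Subsemigroup.closure (blockMat ρ '' (W : Set (FreeGroup Bool × FreeGroup Bool))) := by
  constructor
  · rintro ⟨D, hD, hdiag⟩
    -- every element of the closure is of the form blockMat ρ w
    have key : ∀ D ∈ Subsemigroup.closure
        (blockMat ρ '' (W : Set (FreeGroup Bool × FreeGroup Bool))),
        ∃ w, D = blockMat ρ w := by
      intro D hD
      induction hD using Subsemigroup.closure_induction with
      | mem x hx => rcases hx with ⟨w, _, rfl⟩; exact ⟨w, rfl⟩
      | mul x y _ _ hx hy =>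
          rcases hx with ⟨w, rfl⟩; rcases hy with ⟨w', rfl⟩
          exact ⟨w * w', blockMat_mul ρ w w'⟩
    obtain ⟨⟨u, v⟩, rfl⟩ := key D hD
    -- the off-diagonal entries of the blocks vanish
    have e1 : ∀ i j : Fin 2, i ≠ j → (ρ u : Matrix (Fin 2) (Fin 2) ℤ) i j = 0 := by
      intro i j hij
      have hne : finSumFinEquiv (m := 2) (n := 2) (Sum.inl i) ≠ finSumFinEquiv (m := 2) (n := 2) (Sum.inl j) := by
        simp only [ne_eq, EmbeddingLike.apply_eq_iff_eq]
        exact fun h => hij (Sum.inl.inj h)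
      have := hdiag hne
      simpa [blockMat] using this
    have e2 : ∀ i j : Fin 2, i ≠ j → (ρ v : Matrix (Fin 2) (Fin 2) ℤ) i j = 0 := by
      intro i j hij
      have hne : finSumFinEquiv (m := 2) (n := 2) (Sum.inr i) ≠ finSumFinEquiv (m := 2) (n := 2) (Sum.inr j) := by
        simp only [ne_eq, EmbeddingLike.apply_eq_iff_eq]
        exact fun h => hij (Sum.inr.inj h)
      have := hdiag hne
      simpa [blockMat] using this
    have hu : ρ u * ρ u = 1 := sl2_diag_sq _ (e1 0 1 (by decide)) (e1 1 0 (by decide))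
    have hv : ρ v * ρ v = 1 := sl2_diag_sq _ (e2 0 1 (by decide)) (e2 1 0 (by decide))
    have hsq : blockMat ρ (u, v) * blockMat ρ (u, v) = 1 := by
      rw [blockMat_mul]
      simp [blockMat, Prod.mk_mul_mk, map_mul, Matrix.SpecialLinearGroup.coe_mul, ← hu, ← hv]
      rw [← Matrix.SpecialLinearGroup.coe_mul, ← Matrix.SpecialLinearGroup.coe_mul, hu, hv]
      simp [Matrix.fromBlocks_one]
    exact hsq ▸ Subsemigroup.mul_mem _ hD hD
  · intro h
    exact ⟨1, h, Matrix.isDiag_one⟩
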